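/- Let (K,S,μ) be an h-measure space and f : K → [0,∞)×[0,∞) a measurable function. Then (H)∫_K f dμ = (0,0) if and only if f = (0,0) μ-almost everywhere (i.e. μ({x : f(x) > (0,0)}) = (0,0)). -/

import Mathlib

open MeasureTheory
open scoped NNReal ENNReal

noncomputable section

abbrev Hv : Type := ℝ≥0 × ℝ≥0∞
abbrev Fv : Type := ℝ≥0 × ℝ≥0

/-- Lexicographic order `≤` on `[0,∞)×[0,∞]`. -/
def hle (x y : Hv) : Prop := x.1 < y.1 ∨ (x.1 = y.1 ∧ x.2 ≤ y.2)
/-- Lexicographic order `<` on `[0,∞)×[0,∞]`. -/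
def hlt (x y : Hv) : Prop := x.1 < y.1 ∨ (x.1 = y.1 ∧ x.2 < y.2)
/-- Lexicographic-max addition. -/
def hadd (x y : Hv) : Hv := if x.1 < y.1 then y else if y.1 < x.1 then x else (x.1, x.2 + y.2)
/-- Multiplication: `(0,0)` if either factor is `(0,0)`, else `(d1+d2, m1*m2)`. -/
def hmul (x y : Hv) : Hv := if x = (0,0) ∨ y = (0,0) then (0,0) else (x.1 + y.1, x.2 * y.2)

def flt (x y : Fv) : Prop := x.1 < y.1 ∨ (x.1 = y.1 ∧ x.2 < y.2)
def fle (x y : Fv) : Prop := x.1 < y.1 ∨ (x.1 = y.1 ∧ x.2 ≤ y.2)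
def emb (x : Fv) : Hv := (x.1, (x.2 : ℝ≥0∞))

/-- `f : K → [0,∞)×[0,∞)` is measurable iff `{x | f x < (d,m)} ∈ S` for all `(d,m)`. -/
def HMeas {K : Type*} [MeasurableSpace K] (f : K → Fv) : Prop :=
  ∀ d m : ℝ≥0, MeasurableSet {x | flt (f x) (d, m)}

/-- Infinite sum in `[0,∞)×[0,∞]`: `(D, ∑_{d_j = D} m_j)` where `D = sup d_i`. -/
def hSum (a : ℕ → Hv) : Hv :=
  (⨆ i, (a i).1, ∑' i, if (a i).1 = ⨆ j, (a j).1 then (a i).2 else 0)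

/-- Finite sum (iterated lexicographic-max addition). -/
def hFinsum {n : ℕ} (v : Fin n → Hv) : Hv :=
  (⨆ i, (v i).1, ∑ i, if (v i).1 = ⨆ j, (v j).1 then (v i).2 else 0)

/-- `μ` is an h-measure: `μ ∅ = (0,0)` and countable additivity. -/
def IsHMeasure {K : Type*} [MeasurableSpace K] (μ : Set K → Hv) : Prop :=
  μ ∅ = (0, 0) ∧
  ∀ A : ℕ → Set K, (∀ n, MeasurableSet (A n)) → Pairwise (Function.onFun Disjoint A) →
    μ (⋃ n, A n) = hSum fun n => μ (A n)

/-- The set of integrals of measurable simple functions `(0,0) ≤ g ≤ f`. -/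
def hIntSet {K : Type*} [MeasurableSpace K] (μ : Set K → Hv) (f : K → Fv) : Set Hv :=
  { v | ∃ (n : ℕ) (c : Fin n → Fv) (A : Fin n → Set K),
      (∀ i, MeasurableSet (A i)) ∧ Pairwise (Function.onFun Disjoint A) ∧
      (∀ i, ∀ x ∈ A i, fle (c i) (f x)) ∧
      v = hFinsum fun i => hmul (emb (c i)) (μ (A i)) }

/-- `v` is the least upper bound (w.r.t. `hle`) of `s`; `(H)∫ f dμ = v` means
`IsHLub (hIntSet μ f) v`. -/
def IsHLub (s : Set Hv) (v : Hv) : Prop :=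
  (∀ w ∈ s, hle w v) ∧ ∀ u, (∀ w ∈ s, hle w u) → hle v u

end

/-! ### Auxiliary lemmas -/

lemma hle_zero {w : Hv} (h : hle w (0,0)) : w = (0,0) := by
  rcases h with h | ⟨h1, h2⟩
  · exact absurd h (by simp)
  · exact Prod.ext h1 (le_antisymm h2 (by simp))

lemma flt_zero_of_ne {c : Fv} (h : c ≠ (0,0)) : flt (0,0) c := by
  by_cases h1 : c.1 = 0
  · refine Or.inr ⟨h1.symm, ?_⟩
    rcases eq_or_lt_of_le (zero_le : (0 : ℝ≥0) ≤ c.2) with h2 | h2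
    · exact absurd (Prod.ext h1 h2.symm) h
    · exact h2
  · exact Or.inl (pos_iff_ne_zero.mpr h1)

lemma flt_zero_trans {c y : Fv} (h1 : flt (0,0) c) (h2 : fle c y) : flt (0,0) y := by
  rcases h1 with h1 | ⟨h1a, h1b⟩ <;> rcases h2 with h2 | ⟨h2a, h2b⟩
  · exact Or.inl (lt_trans h1 h2)
  · exact Or.inl (h2a ▸ h1)
  · exact Or.inl (lt_of_le_of_lt (by simpa using h1a.ge) h2)
  · exact Or.inr ⟨h1a.trans h2a, lt_of_lt_of_le h1b h2b⟩

/-- Monotonicity on null sets: a measurable subset of a measurable null set is null. -/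
lemma null_mono {K : Type*} [MeasurableSpace K] {μ : Set K → Hv} (hμ : IsHMeasure μ)
    {A Z : Set K} (hA : MeasurableSet A) (hZ : MeasurableSet Z) (hAZ : A ⊆ Z)
    (h0 : μ Z = (0,0)) : μ A = (0,0) := by
  let s : ℕ → Set K := fun n => match n with
    | 0 => A
    | 1 => Z \ A
    | _ => ∅
  have hmeas : ∀ n, MeasurableSet (s n) := by
    intro n
    rcases n with _ | _ | n
    · exact hA
    · exact hZ.diff hA
    · exact MeasurableSet.empty
  have hpw : Pairwise (Function.onFun Disjoint s) := by
    intro i j hij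
    rcases i with _ | _ | i <;> rcases j with _ | _ | j <;>
      first
        | exact absurd rfl hij
        | exact disjoint_sdiff_self_right
        | exact disjoint_sdiff_self_left
        | exact Set.disjoint_empty _
        | exact Set.empty_disjoint _
  have hU : (⋃ n, s n) = Z := by
    apply subset_antisymm
    · apply Set.iUnion_subset
      intro n
      rcases n with _ | _ | n
      · exact hAZ
      · exact Set.diff_subset
      · exact Set.empty_subset _
    · intro x hx
      by_cases hxA : x ∈ A
      · exact Set.mem_iUnion.2 ⟨0, hxA⟩
      · exact Set.mem_iUnion.2 ⟨1, ⟨hx, hxA⟩⟩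
  have eq := hμ.2 s hmeas hpw
  rw [hU, h0] at eq
  have hbdd : BddAbove (Set.range fun n => (μ (s n)).1) := by
    apply BddAbove.mono (t := {(μ A).1, (μ (Z \ A)).1, (μ (∅ : Set K)).1})
    · rintro _ ⟨n, rfl⟩
      rcases n with _ | _ | n
      · exact Set.mem_insert _ _
      · exact Set.mem_insert_of_mem _ (Set.mem_insert _ _)
      · exact Set.mem_insert_of_mem _ (Set.mem_insert_of_mem _ rfl)
    · exact (((Set.finite_singleton _).insert _).insert _).bddAbove
  have h1 : (0 : ℝ≥0) = ⨆ n, (μ (s n)).1 := congrArg Prod.fst eq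
  have hA1 : (μ A).1 = 0 :=
    le_antisymm (le_of_le_of_eq (le_ciSup hbdd 0) h1.symm) zero_le
  have h2 : (∑' n, if (μ (s n)).1 = ⨆ j, (μ (s j)).1 then (μ (s n)).2 else 0) = 0 :=
    (congrArg Prod.snd eq).symm
  have hA2 : (μ A).2 = 0 := by
    have h3 := ENNReal.tsum_eq_zero.mp h2 0
    have hc : (μ (s 0)).1 = ⨆ j, (μ (s j)).1 := hA1.trans h1
    rw [if_pos hc] at h3
    exact h3
  exact Prod.ext hA1 hA2

/-- `(H)∫_K f dμ = (0,0)` iff `f = (0,0)` μ-almost everywhere. -/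
theorem hint_eq_zero_iff {K : Type*} [MeasurableSpace K] (μ : Set K → Hv)
    (hμ : IsHMeasure μ) (f : K → Fv) (hf : HMeas f) (I : Hv)
    (hI : IsHLub (hIntSet μ f) I) :
    I = (0, 0) ↔ μ {x | flt (0, 0) (f x)} = (0, 0) := by
  set Z : Set K := {x | flt (0, 0) (f x)} with hZdef
  -- the approximating sets
  set B : ℕ → Set K := fun n => {x | flt (f x) (0, ((n : ℝ≥0) + 1)⁻¹)}ᶜ with hB
  have hBmeas : ∀ n, MeasurableSet (B n) := fun n => (hf 0 _).compl
  have hBsub : ∀ n x, x ∈ B n → fle ((0 : ℝ≥0), ((n : ℝ≥0) + 1)⁻¹) (f x) := by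
    intro n x hx
    simp only [hB, Set.mem_compl_iff, Set.mem_setOf_eq, flt] at hx
    push_neg at hx
    by_cases h1 : (f x).1 = 0
    · exact Or.inr ⟨h1.symm, hx.2 h1⟩
    · exact Or.inl (pos_iff_ne_zero.mpr h1)
  have hZU : Z = ⋃ n, B n := by
    ext x
    simp only [hZdef, Set.mem_setOf_eq, Set.mem_iUnion, hB, Set.mem_compl_iff]
    constructor
    · rintro (h1 | ⟨h1, h2⟩)
      · refine ⟨0, ?_⟩
        rintro (ha | ⟨ha, _⟩)
        · exact absurd ha (by simp)
        · exact absurd ha (ne_of_gt h1)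
      · obtain ⟨n, hn⟩ := exists_nat_one_div_lt h2
        refine ⟨n, ?_⟩
        rintro (ha | ⟨_, hb⟩)
        · exact absurd ha (by simp)
        · rw [one_div] at hn
          exact absurd hb (not_lt_of_gt hn)
    · rintro ⟨n, hn⟩
      rcases hBsub n x hn with h | ⟨h1, h2⟩
      · exact Or.inl h
      · refine Or.inr ⟨h1, lt_of_lt_of_le ?_ h2⟩
        positivity
  have hZmeas : MeasurableSet Z := hZU ▸ MeasurableSet.iUnion hBmeas
  constructor
  · -- I = 0 → μ Z = 0
    intro hI0
    by_contra hne
    -- countable additivity on the disjointification of B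
    have eq := hμ.2 (disjointed B) (MeasurableSet.disjointed hBmeas)
      (disjoint_disjointed B)
    rw [iUnion_disjointed, ← hZU] at eq
    have hexists : ∃ N, μ (disjointed B N) ≠ (0,0) := by
      by_contra hall
      push_neg at hall
      apply hne
      rw [eq]
      simp only [hSum, hall]
      refine Prod.ext ?_ ?_
      · simpa using (ciSup_const : ⨆ _ : ℕ, (0 : ℝ≥0) = 0)
      · simp
    obtain ⟨N, hN⟩ := hexists
    -- build a simple function witnessing a nonzero integral
    set c : Fv := ((0 : ℝ≥0), ((N : ℝ≥0) + 1)⁻¹) with hc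
    have hpos : (0 : ℝ≥0) < ((N : ℝ≥0) + 1)⁻¹ := by positivity
    have hcne : emb c ≠ ((0 : ℝ≥0), (0 : ℝ≥0∞)) := fun h =>
      ENNReal.coe_ne_zero.mpr hpos.ne' (congrArg Prod.snd h)
    have hmem : hmul (emb c) (μ (disjointed B N)) ∈ hIntSet μ f := by
      refine ⟨1, fun _ => c, fun _ => disjointed B N,
        fun _ => MeasurableSet.disjointed hBmeas N, Subsingleton.pairwise, ?_, ?_⟩
      · intro i x hx
        exact hBsub N x (disjointed_subset B N hx)
      · refine Prod.ext ?_ ?_ <;> simp [hFinsum, ciSup_unique]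
    have hw0 : hmul (emb c) (μ (disjointed B N)) = (0,0) := hle_zero (hI0 ▸ hI.1 _ hmem)
    rw [hmul, if_neg (by push_neg; exact ⟨hcne, hN⟩)] at hw0
    apply hN
    have h1 := congrArg Prod.fst hw0
    have h2 := congrArg Prod.snd hw0
    simp only [emb, hc] at h1 h2
    refine Prod.ext ?_ ?_
    · simpa using h1
    · rcases mul_eq_zero.mp h2 with h | h
      · exact absurd h (ENNReal.coe_ne_zero.mpr hpos.ne')
      · exact h
  · -- μ Z = 0 → I = 0
    intro hZ0
    apply hle_zero
    apply hI.2
    rintro w ⟨n, c, A, hAmeas, hApw, hcf, rfl⟩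
    have hterm : ∀ i, hmul (emb (c i)) (μ (A i)) = (0,0) := by
      intro i
      by_cases hci : c i = (0,0)
      · rw [hmul, if_pos (Or.inl (by simp [emb, hci]))]
      · have hAZ : A i ⊆ Z := by
          intro x hx
          exact flt_zero_trans (flt_zero_of_ne hci) (hcf i x hx)
        have : μ (A i) = (0,0) := null_mono hμ (hAmeas i) hZmeas hAZ hZ0
        rw [hmul, if_pos (Or.inr this)]
    refine Or.inr ⟨?_, ?_⟩
    · simp only [hFinsum, hterm]
      rcases isEmpty_or_nonempty (Fin n) with h | h
      · simp [ciSup_of_empty]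
      · simpa using (ciSup_const : ⨆ _ : Fin n, (0 : ℝ≥0) = 0).symm
    · simp [hFinsum, hterm]
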